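/- (Transition probability expansion, Step ii of the proof of Theorem 1.3: the decomposition Π_κ = A_κ + B_κ/b_κ with B_κ → B.) For every pair of states e, f ∈ S: lim_{c→0⁺} c^{-3}·( exp(c²·G^c) − A_c )_{e,f} = B_{e,f}. Equivalently, the transition matrix over a time step of length c² of the block-counting process of the seed bank coalescent with migration rate c equals A_c + c³·B + o(c³) entrywise as c → 0⁺. -/

import Mathlib

open scoped Topology

/-- The state space `S = {(n,m) ∈ ℕ₀ × ℕ₀ : n + m ≤ s}`, realized as a finite type. -/
abbrev SBState (s : ℕ) : Type := {p : Fin (s + 1) × Fin (s + 1) // (p.1 : ℕ) + (p.2 : ℕ) ≤ s}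

namespace SBState

variable {s : ℕ}

/-- First coordinate (number of active blocks). -/
def n (e : SBState s) : ℕ := (e.1.1 : ℕ)

/-- Second coordinate (number of dormant blocks). -/
def m (e : SBState s) : ℕ := (e.1.2 : ℕ)

end SBState

/-- The Q-matrix `G^c` of the block-counting process of the seed bank coalescent with
migration rate `c`. -/
noncomputable def seedBankQ (s : ℕ) (K c : ℝ) : Matrix (SBState s) (SBState s) ℝ :=
  fun e f =>
    if f.n + 1 = e.n ∧ f.m = e.m then (e.n * (e.n - 1) : ℝ) / 2
    else if f.n + 1 = e.n ∧ f.m = e.m + 1 then c * e.n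
    else if f.n = e.n + 1 ∧ f.m + 1 = e.m then c * K * e.m
    else if f.n = e.n ∧ f.m = e.m then -(e.n * (e.n - 1) : ℝ) / 2 - c * e.n - c * K * e.m
    else 0

/-- The projection matrix `P` onto the effective state space of the ancient ancestral
lines process. -/
noncomputable def ancientP (s : ℕ) : Matrix (SBState s) (SBState s) ℝ :=
  fun e f =>
    if 1 ≤ e.n ∧ f.n = 1 ∧ f.m = e.m then 1
    else if e.n = 0 ∧ f.n = 0 ∧ f.m = e.m then 1
    else 0

/-- The matrix `G`, the generator part of the ancient ancestral lines process. -/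
noncomputable def ancientG (s : ℕ) (K : ℝ) : Matrix (SBState s) (SBState s) ℝ :=
  fun e f =>
    if f.n = 1 ∧ f.m + 1 = e.m then K * e.m
    else if 1 ≤ e.n ∧ f.n = 0 ∧ f.m = e.m + 1 then (e.n : ℝ)
    else if 1 ≤ e.n ∧ f.n = 1 ∧ f.m = e.m then -(e.n : ℝ) - K * e.m
    else if e.n = 0 ∧ f.n = 0 ∧ f.m = e.m then -K * (e.m : ℝ)
    else 0

instance (s : ℕ) : Nonempty (SBState s) :=
  ⟨⟨(0, 0), by simp⟩⟩

/-- The matrix `A_c`: the fast (coalescence) part of the one-step transition matrix of the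
discretized chain, over a time step of length `c²`. -/
noncomputable def coalA (s : ℕ) (c : ℝ) : Matrix (SBState s) (SBState s) ℝ :=
  fun e f =>
    if 2 ≤ e.n ∧ f.n + 1 = e.n ∧ f.m = e.m then (e.n * (e.n - 1) : ℝ) * c ^ 2 / 2
    else if f.n = e.n ∧ f.m = e.m then 1 - (e.n * (e.n - 1) : ℝ) * c ^ 2 / 2
    else 0

/-- The matrix norm `‖A‖ = max_{e∈S} Σ_{f∈S} |A_{e,f}|`. -/
noncomputable def matNorm {s : ℕ} (A : Matrix (SBState s) (SBState s) ℝ) : ℝ :=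
  Finset.univ.sup' Finset.univ_nonempty fun e => ∑ f : SBState s, |A e f|

/-- The matrix `B`, the limit of the slow (migration) part `B_κ` of the decomposition
`Π_κ = A_κ + B_κ/b_κ`. -/
noncomputable def migB (s : ℕ) (K : ℝ) : Matrix (SBState s) (SBState s) ℝ :=
  fun e f =>
    if 1 ≤ e.n ∧ f.n + 1 = e.n ∧ f.m = e.m + 1 then (e.n : ℝ)
    else if 1 ≤ e.m ∧ f.n = e.n + 1 ∧ f.m + 1 = e.m then K * e.m
    else if f.n = e.n ∧ f.m = e.m then -(e.n : ℝ) - K * e.m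
    else 0

section Aux

variable {s : ℕ}

lemma SBState.eq_iff (e f : SBState s) : e = f ↔ f.n = e.n ∧ f.m = e.m := by
  constructor
  · rintro rfl; exact ⟨rfl, rfl⟩
  · rintro ⟨h1, h2⟩
    rw [Subtype.ext_iff, Prod.ext_iff, Fin.ext_iff, Fin.ext_iff]
    exact ⟨h1.symm, h2.symm⟩

lemma seedBankQ_split (s : ℕ) (K c : ℝ) :
    seedBankQ s K c = seedBankQ s K 0 + c • migB s K := by
  ext e f
  simp only [seedBankQ, migB, Matrix.add_apply, Matrix.smul_apply, smul_eq_mul]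
  split_ifs <;> first | ring1 | (exfalso; omega)

lemma coalA_eq (s : ℕ) (K c : ℝ) :
    coalA s c = 1 + c ^ 2 • seedBankQ s K 0 := by
  ext e f
  simp only [coalA, seedBankQ, Matrix.add_apply, Matrix.smul_apply, smul_eq_mul,
    Matrix.one_apply, SBState.eq_iff]
  split_ifs <;>
    first
      | ring1
      | (exfalso; omega)
      | (have h1 : SBState.n e = 1 := by omega
         rw [h1]; norm_num)

lemma sbM_split (s : ℕ) (K c : ℝ) :
    c ^ 2 • seedBankQ s K c = c ^ 2 • seedBankQ s K 0 + c ^ 3 • migB s K := by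
  rw [seedBankQ_split s K c, smul_add, smul_smul, show c ^ 2 * c = c ^ 3 by ring]

lemma sb_entry_key (s : ℕ) (K c : ℝ) (hc : c ≠ 0) (e f : SBState s) :
    (NormedSpace.exp (c ^ 2 • seedBankQ s K c) e f - coalA s c e f) / c ^ 3 =
      ((NormedSpace.exp (c ^ 2 • seedBankQ s K c) - 1 - c ^ 2 • seedBankQ s K c) e f) / c ^ 3
        + migB s K e f := by
  have h1 : coalA s c e f =
      (1 : Matrix (SBState s) (SBState s) ℝ) e f + (c ^ 2 • seedBankQ s K c) e f
        - c ^ 3 * migB s K e f := by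
    rw [coalA_eq s K c, sbM_split s K c]
    simp only [Matrix.add_apply, Matrix.smul_apply, smul_eq_mul]
    ring
  rw [h1]
  simp only [Matrix.sub_apply]
  field_simp
  ring

end Aux

set_option maxHeartbeats 2000000 in
set_option synthInstance.maxHeartbeats 1000000 in
/-- (Transition probability expansion, Step ii of the proof of
Theorem 1.3.) The transition matrix `exp(c²·G^c)` over a time step of length `c²` of the
block-counting process of the seed bank coalescent with migration rate `c` satisfies
`c⁻³·(exp(c²·G^c) − A_c)_{e,f} → B_{e,f}` as `c → 0⁺`, i.e. it equals
`A_c + c³·B + o(c³)` entrywise. -/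
theorem seedBank_transition_expansion (s : ℕ) (hs : 1 ≤ s) (K : ℝ) (hK : 0 < K)
    (e f : SBState s) :
    Filter.Tendsto
      (fun c : ℝ =>
        (NormedSpace.exp (c ^ 2 • seedBankQ s K c) e f - coalA s c e f) / c ^ 3)
      (𝓝[>] (0 : ℝ)) (𝓝 (migB s K e f)) := by
  classical
  letI : SeminormedRing (Matrix (SBState s) (SBState s) ℝ) := Matrix.linftyOpSemiNormedRing
  letI : NormedRing (Matrix (SBState s) (SBState s) ℝ) := Matrix.linftyOpNormedRing
  letI : NormedAlgebra ℝ (Matrix (SBState s) (SBState s) ℝ) := Matrix.linftyOpNormedAlgebra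
  -- entries are bounded by the L∞ operator norm
  have hentry : ∀ (A : Matrix (SBState s) (SBState s) ℝ) (e f : SBState s), |A e f| ≤ ‖A‖ := by
    intro A e f
    have h1 : ‖A e f‖₊ ≤ ‖A‖₊ := by
      rw [Matrix.linfty_opNNNorm_def]
      exact le_trans
        (Finset.single_le_sum (f := fun j => ‖A e j‖₊) (fun _ _ => zero_le)
          (Finset.mem_univ f))
        (Finset.le_sup (f := fun i => ∑ j : SBState s, ‖A i j‖₊) (Finset.mem_univ e))
    calc |A e f| = ‖A e f‖ := (Real.norm_eq_abs _).symm
      _ ≤ ‖A‖ := by exact_mod_cast h1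
  set CC : ℝ := ‖seedBankQ s K 0‖ + ‖migB s K‖ with hCCdef
  have hCC0 : 0 ≤ CC := add_nonneg (norm_nonneg _) (norm_nonneg _)
  have hMnorm : ∀ c : ℝ, 0 < c → c ≤ 1 → ‖c ^ 2 • seedBankQ s K c‖ ≤ c ^ 2 * CC := by
    intro c hc hc1
    rw [sbM_split s K c]
    have h32 : c ^ 3 ≤ c ^ 2 := by nlinarith
    calc ‖c ^ 2 • seedBankQ s K 0 + c ^ 3 • migB s K‖
        ≤ ‖c ^ 2 • seedBankQ s K 0‖ + ‖c ^ 3 • migB s K‖ := norm_add_le _ _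
      _ = c ^ 2 * ‖seedBankQ s K 0‖ + c ^ 3 * ‖migB s K‖ := by
          rw [norm_smul, norm_smul, Real.norm_eq_abs, Real.norm_eq_abs,
            abs_of_pos (pow_pos hc 2), abs_of_pos (pow_pos hc 3)]
      _ ≤ c ^ 2 * ‖seedBankQ s K 0‖ + c ^ 2 * ‖migB s K‖ :=
          add_le_add (le_refl _) (mul_le_mul_of_nonneg_right h32 (norm_nonneg _))
      _ = c ^ 2 * CC := by rw [hCCdef]; ring
  -- second-order Taylor estimate for exp at 0
  have hexp := NormedSpace.exp_hasFPowerSeriesAt_zero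
    (𝕂 := ℝ) (𝔸 := Matrix (SBState s) (SBState s) ℝ)
  have hO := hexp.isBigO_sub_partialSum_pow 2
  rw [Asymptotics.isBigO_iff] at hO
  obtain ⟨C, hC⟩ := hO
  rw [Metric.eventually_nhds_iff] at hC
  obtain ⟨δ, hδ, hCb⟩ := hC
  have hps : ∀ y : Matrix (SBState s) (SBState s) ℝ,
      (NormedSpace.expSeries ℝ (Matrix (SBState s) (SBState s) ℝ)).partialSum 2 y = 1 + y := by
    intro y
    simp [FormalMultilinearSeries.partialSum, Finset.sum_range_succ,
      NormedSpace.expSeries_apply_eq, Nat.factorial]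
  -- the remainder term tends to 0 after division by c³
  set ε : ℝ := min 1 (δ / (CC + 1)) with hεdef
  have hε : 0 < ε := lt_min one_pos (div_pos hδ (by linarith))
  have hrem : Filter.Tendsto
      (fun c : ℝ =>
        ((NormedSpace.exp (c ^ 2 • seedBankQ s K c) - 1 - c ^ 2 • seedBankQ s K c) e f) / c ^ 3)
      (𝓝[>] (0 : ℝ)) (𝓝 0) := by
    apply squeeze_zero_norm'
      (a := fun c : ℝ => |C| * CC ^ 2 * c)
    · filter_upwards [Ioo_mem_nhdsGT_of_mem (show (0 : ℝ) ∈ Set.Ico 0 ε from ⟨le_refl 0, hε⟩)]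
        with c hc
      obtain ⟨hc0, hcε⟩ := hc
      have hc1 : c ≤ 1 := le_trans hcε.le (min_le_left _ _)
      have hMle : ‖c ^ 2 • seedBankQ s K c‖ ≤ c ^ 2 * CC := hMnorm c hc0 hc1
      have hMδ : dist (c ^ 2 • seedBankQ s K c) 0 < δ := by
        rw [dist_zero_right]
        have h1 : c ^ 2 * CC ≤ c * CC := by nlinarith [mul_nonneg (mul_nonneg (sub_nonneg.mpr hc1) hc0.le) hCC0]
        have h2 : c * CC < δ := by
          have h3 : c < δ / (CC + 1) := lt_of_lt_of_le hcε (min_le_right _ _)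
          have hCC1 : (0 : ℝ) < CC + 1 := by linarith
          rw [lt_div_iff₀ hCC1] at h3
          nlinarith
        linarith
      have hBnd := hCb hMδ
      rw [zero_add] at hBnd; erw [hps] at hBnd
      have h3 : ‖NormedSpace.exp (c ^ 2 • seedBankQ s K c) - 1 - c ^ 2 • seedBankQ s K c‖
          ≤ |C| * ‖c ^ 2 • seedBankQ s K c‖ ^ 2 := by
        rw [sub_sub]
        calc ‖NormedSpace.exp (c ^ 2 • seedBankQ s K c) - (1 + c ^ 2 • seedBankQ s K c)‖
            ≤ C * ‖‖c ^ 2 • seedBankQ s K c‖ ^ 2‖ := hBnd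
          _ = C * ‖c ^ 2 • seedBankQ s K c‖ ^ 2 := by
              rw [Real.norm_eq_abs, abs_of_nonneg (by positivity)]
          _ ≤ |C| * ‖c ^ 2 • seedBankQ s K c‖ ^ 2 :=
              mul_le_mul_of_nonneg_right (le_abs_self C) (by positivity)
      have habs :
          |(NormedSpace.exp (c ^ 2 • seedBankQ s K c) - 1 - c ^ 2 • seedBankQ s K c) e f|
            ≤ |C| * (c ^ 2 * CC) ^ 2 :=
        calc |(NormedSpace.exp (c ^ 2 • seedBankQ s K c) - 1 - c ^ 2 • seedBankQ s K c) e f|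
            ≤ ‖NormedSpace.exp (c ^ 2 • seedBankQ s K c) - 1 - c ^ 2 • seedBankQ s K c‖ :=
              hentry _ e f
          _ ≤ |C| * ‖c ^ 2 • seedBankQ s K c‖ ^ 2 := h3
          _ ≤ |C| * (c ^ 2 * CC) ^ 2 :=
              mul_le_mul_of_nonneg_left
                (pow_le_pow_left₀ (norm_nonneg _) hMle 2) (abs_nonneg C)
      calc ‖((NormedSpace.exp (c ^ 2 • seedBankQ s K c) - 1 - c ^ 2 • seedBankQ s K c) e f)
            / c ^ 3‖
          = |(NormedSpace.exp (c ^ 2 • seedBankQ s K c) - 1 - c ^ 2 • seedBankQ s K c) e f|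
            / c ^ 3 := by
            rw [norm_div, Real.norm_eq_abs, Real.norm_eq_abs, abs_of_pos (pow_pos hc0 3)]
        _ ≤ (|C| * (c ^ 2 * CC) ^ 2) / c ^ 3 := by
            gcongr
        _ = |C| * CC ^ 2 * c := by
            rw [div_eq_iff (by positivity : (c : ℝ) ^ 3 ≠ 0)]
            ring
    · have h0 : Filter.Tendsto (fun c : ℝ => c) (𝓝[>] (0 : ℝ)) (𝓝 0) :=
        Filter.tendsto_id.mono_left nhdsWithin_le_nhds
      have := h0.const_mul (|C| * CC ^ 2)
      simpa using this
  have hfinal : Filter.Tendsto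
      (fun c : ℝ =>
        ((NormedSpace.exp (c ^ 2 • seedBankQ s K c) - 1 - c ^ 2 • seedBankQ s K c) e f) / c ^ 3
          + migB s K e f)
      (𝓝[>] (0 : ℝ)) (𝓝 (0 + migB s K e f)) := hrem.add tendsto_const_nhds
  rw [zero_add] at hfinal
  refine hfinal.congr' ?_
  filter_upwards [self_mem_nhdsWithin] with c hc
  exact (sb_entry_key s K c (ne_of_gt hc) e f).symm
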